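/- Let n ≥ 2. For every multiindex β ∈ ℕ₀ⁿ, every t > 0, and every x ∈ ℝⁿ \ {0}: |D_x^β ( e^{−t|x|} / |x|^{n−1} )| ≤ β! · (√2/|x|)^{n−1} · ((2n+2)/|x|)^{|β|} · e^{−t|x|/2}. -/

import Mathlib

open MeasureTheory Metric Real Finset

/-- The partial derivative `∂/∂xᵢ` of a function on `ℝⁿ` (Euclidean space). -/
noncomputable def partialDeriv {n : ℕ} {F : Type*} [NormedAddCommGroup F] [NormedSpace ℝ F]
    (i : Fin n) (f : EuclideanSpace ℝ (Fin n) → F) : EuclideanSpace ℝ (Fin n) → F :=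
  fun x => fderiv ℝ f x (EuclideanSpace.single i (1 : ℝ))

/-- The multiindex derivative `D^β = ∂^{β₁}_{x₁} ⋯ ∂^{βₙ}_{xₙ}`. -/
noncomputable def mderiv {n : ℕ} {F : Type*} [NormedAddCommGroup F] [NormedSpace ℝ F]
    (β : Fin n → ℕ) (f : EuclideanSpace ℝ (Fin n) → F) : EuclideanSpace ℝ (Fin n) → F :=
  (List.finRange n).foldr (fun i g => (partialDeriv i)^[β i] g) f

/-- The length `|β| = β₁ + ⋯ + βₙ` of a multiindex. -/
def msize {n : ℕ} (β : Fin n → ℕ) : ℕ := ∑ i, β i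

/-- The factorial `β! = β₁! ⋯ βₙ!` of a multiindex. -/
def mfactorial {n : ℕ} (β : Fin n → ℕ) : ℕ := ∏ i, (β i).factorial


-- === auxiliary ===
open Metric in
lemma cauchy1d {g : ℂ → ℂ} {V : Set ℂ} (hV : IsOpen V) {c : ℂ} {r M : ℝ} (hr : 0 < r)
    (hsub : closedBall c r ⊆ V) (hg : DifferentiableOn ℂ g V)
    (hM : ∀ w ∈ closedBall c r, ‖g w‖ ≤ M) (k : ℕ) :
    ‖iteratedDeriv k g c‖ ≤ k.factorial * M / r ^ k := by
  have hM0 : 0 ≤ M := le_trans (norm_nonneg _) (hM c (mem_closedBall_self hr.le))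
  have hball : closure (ball c r) = closedBall c r := closure_ball c hr.ne'
  have hd : DiffContOnCl ℂ g (ball c r) := by
    apply DifferentiableOn.diffContOnCl
    rw [hball]; exact hg.mono hsub
  set R : NNReal := ⟨r, hr.le⟩ with hR
  have hps : HasFPowerSeriesOnBall g (cauchyPowerSeries g c R) c R :=
    hd.hasFPowerSeriesOnBall (by exact_mod_cast hr)
  have h1 : (k.factorial • (cauchyPowerSeries g c R k fun _ => (1:ℂ)))
      = iteratedFDeriv ℂ k g c fun _ => (1:ℂ) := hps.factorial_smul 1 k
  have h2 : iteratedDeriv k g c = iteratedFDeriv ℂ k g c fun _ => (1:ℂ) :=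
    iteratedDeriv_eq_iteratedFDeriv ..
  -- bound on the coefficient
  have hcont : Continuous fun θ : ℝ => ‖g (circleMap c r θ)‖ := by
    have : ContinuousOn g V := hg.continuousOn
    exact (this.comp_continuous (continuous_circleMap c r)
      (fun θ => hsub (sphere_subset_closedBall (circleMap_mem_sphere c hr.le θ)))).norm
  have hint : (∫ θ : ℝ in (0)..2 * Real.pi, ‖g (circleMap c r θ)‖) ≤ 2 * Real.pi * M := by
    have := intervalIntegral.integral_mono_on (a := 0) (b := 2 * Real.pi)
      (f := fun θ : ℝ => ‖g (circleMap c r θ)‖) (g := fun _ : ℝ => M)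
      Real.two_pi_pos.le (hcont.intervalIntegrable (μ := MeasureTheory.volume) _ _) (intervalIntegrable_const)
      (fun θ _ => hM _ (sphere_subset_closedBall (circleMap_mem_sphere c hr.le θ)))
    simpa using this
  have hcoef : ‖cauchyPowerSeries g c R k fun _ => (1:ℂ)‖ ≤ M / r ^ k := by
    calc ‖cauchyPowerSeries g c R k fun _ => (1:ℂ)‖
        ≤ ‖cauchyPowerSeries g c R k‖ * ∏ _i : Fin k, ‖(1:ℂ)‖ :=
          (cauchyPowerSeries g c R k).le_opNorm _
      _ = ‖cauchyPowerSeries g c R k‖ := by simp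
      _ ≤ ((2 * Real.pi)⁻¹ * ∫ θ : ℝ in (0)..2 * Real.pi, ‖g (circleMap c (R:ℝ) θ)‖)
            * |(R:ℝ)|⁻¹ ^ k := norm_cauchyPowerSeries_le g c R k
      _ ≤ ((2 * Real.pi)⁻¹ * (2 * Real.pi * M)) * |(R:ℝ)|⁻¹ ^ k := by
          have : (R:ℝ) = r := rfl
          rw [this]
          gcongr
      _ = M / r ^ k := by
          have : (R:ℝ) = r := rfl
          rw [this, abs_of_pos hr]
          field_simp [Real.pi_ne_zero]
          rw [one_div, inv_pow, mul_assoc, inv_mul_cancel₀ (pow_ne_zero _ hr.ne'), mul_one]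
  calc ‖iteratedDeriv k g c‖ = (k.factorial : ℝ) * ‖cauchyPowerSeries g c R k fun _ => (1:ℂ)‖ := by
        rw [h2, ← h1, ← Nat.cast_smul_eq_nsmul ℝ, norm_smul]; rw [Real.norm_natCast]
    _ ≤ (k.factorial : ℝ) * (M / r ^ k) := by gcongr
    _ = k.factorial * M / r ^ k := by ring


variable {n : ℕ}

noncomputable def cpd (i : Fin n) (g : (Fin n → ℂ) → ℂ) : (Fin n → ℂ) → ℂ :=
  fun z => fderiv ℂ g z (Pi.single i 1)

lemma cpd_analytic {U : Set (Fin n → ℂ)} {G : (Fin n → ℂ) → ℂ}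
    (hG : AnalyticOnNhd ℂ G U) (i : Fin n) : AnalyticOnNhd ℂ (cpd i G) U := by
  intro z hz
  exact ((ContinuousLinearMap.apply ℂ ℂ (Pi.single i 1)).analyticAt _).comp (hG.fderiv z hz)

lemma hasDerivAt_slice {U : Set (Fin n → ℂ)} (hU : IsOpen U) {G : (Fin n → ℂ) → ℂ}
    (hG : AnalyticOnNhd ℂ G U) (i : Fin n) {z : Fin n → ℂ} {w : ℂ}
    (hz : Function.update z i w ∈ U) :
    HasDerivAt (fun w' => G (Function.update z i w')) (cpd i G (Function.update z i w)) w := by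
  have hA : ∀ w' : ℂ, Function.update z i w' = z + (w' - z i) • (Pi.single i (1:ℂ) : Fin n → ℂ) := by
    intro w'; funext j
    rcases eq_or_ne j i with rfl | hj
    · simp
    · simp [Function.update_of_ne hj, Pi.single_apply, hj]
  have hd : HasDerivAt (fun w' : ℂ => z + (w' - z i) • (Pi.single i (1:ℂ) : Fin n → ℂ))
      ((1:ℂ) • (Pi.single i (1:ℂ) : Fin n → ℂ)) w := by
    exact (((hasDerivAt_id w).sub_const (z i)).smul_const (Pi.single i (1:ℂ))).const_add z
  rw [one_smul] at hd
  have hdG : DifferentiableAt ℂ G (Function.update z i w) := (hG _ hz).differentiableAt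
  have hd' : HasDerivAt (Function.update z i) (Pi.single i (1:ℂ) : Fin n → ℂ) w := by
    have : (Function.update z i : ℂ → Fin n → ℂ)
        = fun w' : ℂ => z + (w' - z i) • (Pi.single i (1:ℂ) : Fin n → ℂ) := funext hA
    rw [this]; exact hd
  have := hdG.hasFDerivAt.comp_hasDerivAt w hd'
  simpa only [Function.comp_def, cpd] using this

lemma cpd_iterate_eq {U : Set (Fin n → ℂ)} (hU : IsOpen U) (i : Fin n) :
    ∀ (k : ℕ) (G : (Fin n → ℂ) → ℂ), AnalyticOnNhd ℂ G U → ∀ z ∈ U,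
      (cpd i)^[k] G z = iteratedDeriv k (fun w => G (Function.update z i w)) (z i) := by
  intro k
  induction k with
  | zero => intro G hG z hz; simp [Function.update_eq_self]
  | succ k ih =>
    intro G hG z hz
    rw [Function.iterate_succ_apply, ih (cpd i G) (cpd_analytic hG i) z hz,
      iteratedDeriv_succ']
    apply Filter.EventuallyEq.iteratedDeriv_eq
    have hcu : Continuous (Function.update z i) := by
      apply continuous_pi
      intro j
      rcases eq_or_ne j i with rfl | hj
      · simpa using continuous_id'
      · simpa [Function.update_of_ne hj] using (continuous_const : Continuous fun _ : ℂ => z j)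
    have hop : IsOpen {w : ℂ | Function.update z i w ∈ U} := hU.preimage hcu
    have hzmem : z i ∈ {w : ℂ | Function.update z i w ∈ U} := by
      simp [Function.update_eq_self, hz]
    filter_upwards [hop.mem_nhds hzmem] with w hw
    exact ((hasDerivAt_slice hU hG i hw).deriv).symm

def poly (r : ℝ) (l : List (Fin n)) (z : Fin n → ℂ) : Set (Fin n → ℂ) :=
  {w | (∀ i ∈ l, dist (w i) (z i) ≤ r) ∧ ∀ i, i ∉ l → w i = z i}

lemma self_mem_poly {r : ℝ} (hr : 0 ≤ r) (l : List (Fin n)) (z : Fin n → ℂ) :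
    z ∈ poly r l z :=
  ⟨fun i _ => by simpa using hr, fun _ _ => rfl⟩

lemma foldr_analytic {U : Set (Fin n → ℂ)} (β : Fin n → ℕ) :
    ∀ (l : List (Fin n)) (G : (Fin n → ℂ) → ℂ), AnalyticOnNhd ℂ G U →
      AnalyticOnNhd ℂ (l.foldr (fun i g => (cpd i)^[β i] g) G) U := by
  intro l
  induction l with
  | nil => intro G hG; exact hG
  | cons i l' ih =>
    intro G hG
    have h' := ih G hG
    simp only [List.foldr_cons]
    induction β i with
    | zero => exact h'
    | succ k ihk => rw [Function.iterate_succ_apply'] ; exact cpd_analytic ihk i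

lemma key {U : Set (Fin n → ℂ)} (hU : IsOpen U) {r M : ℝ} (hr : 0 < r) (β : Fin n → ℕ) :
    ∀ (l : List (Fin n)), l.Nodup → ∀ (G : (Fin n → ℂ) → ℂ), AnalyticOnNhd ℂ G U →
      ∀ z : Fin n → ℂ, poly r l z ⊆ U → (∀ w ∈ poly r l z, ‖G w‖ ≤ M) →
      ‖(l.foldr (fun i g => (cpd i)^[β i] g) G) z‖ ≤
        (l.map fun i => ((β i).factorial : ℝ)).prod * M / r ^ (l.map β).sum := by
  intro l
  induction l with
  | nil =>
    intro _ G hG z hsub hM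
    simpa using hM z (self_mem_poly hr.le [] z)
  | cons i l' ih =>
    intro hnd G hG z hsub hM
    have hinotin : i ∉ l' := (List.nodup_cons.mp hnd).1
    have hnd' : l'.Nodup := (List.nodup_cons.mp hnd).2
    set H := l'.foldr (fun i g => (cpd i)^[β i] g) G with hH
    have hHa : AnalyticOnNhd ℂ H U := foldr_analytic β l' G hG
    have hzU : z ∈ U := hsub (self_mem_poly hr.le _ z)
    -- membership lemma: points of the closed ball give polydisc membership
    have hball : ∀ w : ℂ, dist w (z i) ≤ r → Function.update z i w ∈ poly r (i :: l') z := by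
      intro w hw
      constructor
      · intro j _
        rcases eq_or_ne j i with rfl | hj
        · simpa using hw
        · simp [Function.update_of_ne hj, hr.le]
      · intro j hj
        have hj' : j ≠ i := fun h => hj (h ▸ (List.mem_cons_self (a := i) (l := l')))
        simp [Function.update_of_ne hj']
    -- smaller polydisc inclusion
    have hpsub : ∀ w : ℂ, dist w (z i) ≤ r →
        poly r l' (Function.update z i w) ⊆ poly r (i :: l') z := by
      intro w hw v hv
      constructor
      · intro j hj
        rcases eq_or_ne j i with rfl | hjne
        · rw [hv.2 j hinotin]; simpa using hw
        · have hjl' : j ∈ l' := by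
            rcases List.mem_cons.mp hj with h | h
            · exact absurd h hjne
            · exact h
          have := hv.1 j hjl'
          rwa [Function.update_of_ne hjne] at this
      · intro j hj
        have hji : j ≠ i := fun h => hj (h ▸ (List.mem_cons_self (a := i) (l := l')))
        have hjl' : j ∉ l' := fun h => hj (List.mem_cons_of_mem i h)
        rw [hv.2 j hjl', Function.update_of_ne hji]
    set M' := (l'.map fun i => ((β i).factorial : ℝ)).prod * M / r ^ (l'.map β).sum with hM'
    -- bound on slices via induction hypothesis
    have hMslice : ∀ w ∈ Metric.closedBall (z i) r, ‖H (Function.update z i w)‖ ≤ M' := by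
      intro w hw
      rw [Metric.mem_closedBall] at hw
      exact ih hnd' G hG (Function.update z i w)
        (fun v hv => hsub (hpsub w hw hv))
        (fun v hv => hM v (hpsub w hw hv))
    -- 1D Cauchy estimate on the slice
    have hV : IsOpen {w : ℂ | Function.update z i w ∈ U} := by
      apply hU.preimage
      apply continuous_pi
      intro j
      rcases eq_or_ne j i with rfl | hj
      · simpa using continuous_id'
      · simpa [Function.update_of_ne hj] using (continuous_const : Continuous fun _ : ℂ => z j)
    have hVsub : Metric.closedBall (z i) r ⊆ {w : ℂ | Function.update z i w ∈ U} :=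
      fun w hw => hsub (hball w (Metric.mem_closedBall.mp hw))
    have hdiff : DifferentiableOn ℂ (fun w => H (Function.update z i w))
        {w : ℂ | Function.update z i w ∈ U} := by
      intro w hw
      exact (hasDerivAt_slice hU hHa i hw).differentiableAt.differentiableWithinAt
    have h1d := cauchy1d hV hr hVsub hdiff hMslice (β i)
    have heq : (((i :: l').foldr (fun i g => (cpd i)^[β i] g) G)) z
        = iteratedDeriv (β i) (fun w => H (Function.update z i w)) (z i) := by
      simp only [List.foldr_cons, ← hH]
      exact cpd_iterate_eq hU i (β i) H hHa z hzU
    rw [heq]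
    refine h1d.trans (le_of_eq ?_)
    simp only [hM', List.map_cons, List.prod_cons, List.sum_cons, pow_add]
    have hrk : (r : ℝ) ^ (β i) ≠ 0 := by positivity
    have hrs : (r : ℝ) ^ ((l'.map β).sum) ≠ 0 := by positivity
    field_simp

 variable {n : ℕ}
noncomputable def iotaC (n : ℕ) : EuclideanSpace ℝ (Fin n) →L[ℝ] (Fin n → ℂ) :=
  ContinuousLinearMap.pi fun i => Complex.ofRealCLM.comp (EuclideanSpace.proj i)

@[simp] lemma iotaC_apply (y : EuclideanSpace ℝ (Fin n)) (i : Fin n) :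
    iotaC n y i = (y i : ℂ) := rfl

lemma iotaC_single (i : Fin n) :
    iotaC n (EuclideanSpace.single i (1:ℝ)) = (Pi.single i (1:ℂ) : Fin n → ℂ) := by
  funext j
  rcases eq_or_ne j i with rfl | hj
  · simp [EuclideanSpace.single_apply]
  · simp [EuclideanSpace.single_apply, Pi.single_apply, hj]

lemma pd_step {U : Set (Fin n → ℂ)} {G : (Fin n → ℂ) → ℂ}
    (hG : AnalyticOnNhd ℂ G U) (i : Fin n) {y : EuclideanSpace ℝ (Fin n)}
    (hy : iotaC n y ∈ U) :
    partialDeriv i (fun v => (G (iotaC n v)).re) y = (cpd i G (iotaC n y)).re := by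
  have hdG : DifferentiableAt ℂ G (iotaC n y) := (hG _ hy).differentiableAt
  have h1 : HasFDerivAt (fun v => G (iotaC n v))
      (((fderiv ℂ G (iotaC n y)).restrictScalars ℝ).comp (iotaC n)) y :=
    (hdG.hasFDerivAt.restrictScalars ℝ).comp y (iotaC n).hasFDerivAt
  have h2 : HasFDerivAt (fun v => (G (iotaC n v)).re)
      (Complex.reCLM.comp (((fderiv ℂ G (iotaC n y)).restrictScalars ℝ).comp (iotaC n))) y :=
    Complex.reCLM.hasFDerivAt.comp y h1
  unfold partialDeriv
  rw [h2.fderiv]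
  simp only [ContinuousLinearMap.coe_comp', Function.comp_apply, iotaC_single]
  rfl

lemma pd_congr {V : Set (EuclideanSpace ℝ (Fin n))} (hV : IsOpen V)
    {f g : EuclideanSpace ℝ (Fin n) → ℝ} (h : ∀ y ∈ V, f y = g y) (i : Fin n) :
    ∀ y ∈ V, partialDeriv i f y = partialDeriv i g y := by
  intro y hy
  unfold partialDeriv
  rw [Filter.EventuallyEq.fderiv_eq (Filter.eventuallyEq_of_mem (hV.mem_nhds hy) h)]

lemma pd_iter_congr {V : Set (EuclideanSpace ℝ (Fin n))} (hV : IsOpen V) (i : Fin n) (k : ℕ) :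
    ∀ {f g : EuclideanSpace ℝ (Fin n) → ℝ}, (∀ y ∈ V, f y = g y) →
    ∀ y ∈ V, (partialDeriv i)^[k] f y = (partialDeriv i)^[k] g y := by
  induction k with
  | zero => intro f g h y hy; exact h y hy
  | succ k ih =>
    intro f g h y hy
    rw [Function.iterate_succ_apply, Function.iterate_succ_apply]
    exact ih (pd_congr hV h i) y hy

lemma pd_iter_step {U : Set (Fin n → ℂ)} (hU : IsOpen U) (i : Fin n) (k : ℕ) :
    ∀ (G : (Fin n → ℂ) → ℂ), AnalyticOnNhd ℂ G U → ∀ y, iotaC n y ∈ U →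
      (partialDeriv i)^[k] (fun v => (G (iotaC n v)).re) y
        = ((cpd i)^[k] G (iotaC n y)).re := by
  induction k with
  | zero => intro G hG y hy; rfl
  | succ k ih =>
    intro G hG y hy
    rw [Function.iterate_succ_apply, Function.iterate_succ_apply]
    have hV : IsOpen ((iotaC n) ⁻¹' U) := hU.preimage (iotaC n).continuous
    have hcongr : ∀ v ∈ (iotaC n) ⁻¹' U,
        partialDeriv i (fun v => (G (iotaC n v)).re) v = (fun v => (cpd i G (iotaC n v)).re) v :=
      fun v hv => pd_step hG i hv
    rw [pd_iter_congr hV i k hcongr y hy]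
    exact ih (cpd i G) (by
      intro z hz
      exact ((ContinuousLinearMap.apply ℂ ℂ (Pi.single i 1)).analyticAt _).comp (hG.fderiv z hz))
      y hy

lemma mderiv_transfer {U : Set (Fin n → ℂ)} (hU : IsOpen U) (β : Fin n → ℕ) :
    ∀ (l : List (Fin n)) (G : (Fin n → ℂ) → ℂ), AnalyticOnNhd ℂ G U →
      ∀ y, iotaC n y ∈ U →
      (l.foldr (fun i g => (partialDeriv i)^[β i] g) (fun v => (G (iotaC n v)).re)) y
        = ((l.foldr (fun i g => (cpd i)^[β i] g) G) (iotaC n y)).re := by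
  intro l
  induction l with
  | nil => intro G hG y hy; rfl
  | cons i l' ih =>
    intro G hG y hy
    simp only [List.foldr_cons]
    have hV : IsOpen ((iotaC n) ⁻¹' U) := hU.preimage (iotaC n).continuous
    have hGa : AnalyticOnNhd ℂ (l'.foldr (fun i g => (cpd i)^[β i] g) G) U := by
      clear ih hy y
      induction l' with
      | nil => exact hG
      | cons j l'' ih2 =>
        simp only [List.foldr_cons]
        induction β j with
        | zero => exact ih2
        | succ k ihk =>
          rw [Function.iterate_succ_apply']
          intro z hz
          exact ((ContinuousLinearMap.apply ℂ ℂ (Pi.single j 1)).analyticAt _).comp (ihk.fderiv z hz)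
    rw [pd_iter_congr hV i (β i) (fun v hv => ih G hG v hv) y hy]
    exact pd_iter_step hU i (β i) _ hGa y hy


set_option maxHeartbeats 1000000 in
lemma geom {n : ℕ} (hn : 2 ≤ n) (u p q : Fin n → ℝ) {r : ℝ} (hr : 0 < r)
    (hX : ∑ i, u i ^ 2 = ((2 * n + 2) * r) ^ 2)
    (hpq : ∀ i, p i ^ 2 + q i ^ 2 ≤ r ^ 2) :
    (∑ i, u i ^ 2) / 2 ≤ ∑ i, ((u i + p i) ^ 2 - q i ^ 2) := by
  haveI : Nonempty (Fin n) := ⟨⟨0, by omega⟩⟩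
  have hne : (Finset.univ : Finset (Fin n)).Nonempty := Finset.univ_nonempty
  obtain ⟨i₀, -, hmax⟩ := Finset.exists_max_image Finset.univ (fun i => u i ^ 2) hne
  set c := u i₀ with hc
  have hn0 : (0:ℝ) < n := by positivity
  have hn1 : (2 : ℝ) ≤ n := by exact_mod_cast hn
  have hsum_le : ∑ i, u i ^ 2 ≤ n * c ^ 2 := by
    calc ∑ i, u i ^ 2 ≤ ∑ _i : Fin n, c ^ 2 :=
          Finset.sum_le_sum fun i _ => hmax i (Finset.mem_univ i)
      _ = n * c ^ 2 := by simp [mul_comm]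
  have hc2 : 4 * ((n:ℝ) + 1) ^ 2 * r ^ 2 ≤ (n : ℝ) * c ^ 2 := by nlinarith [hsum_le, hX]
  have h16 : (4 * r) ^ 2 ≤ c ^ 2 := by
    nlinarith [hc2, hr, mul_pos hn0 (mul_pos hr hr), sq_nonneg ((n:ℝ) - 1)]
  have h16' : (4 * r) ^ 2 ≤ |c| ^ 2 := by rw [sq_abs]; exact h16
  have habs : 4 * r ≤ |c| := le_of_pow_le_pow_left₀ two_ne_zero (abs_nonneg c) h16'
  have hcr : 2 * r ≤ |c| := by linarith
  -- per-coordinate bounds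
  have hsmall : ∀ i, u i ^ 2 / 2 - r ^ 2 ≤ (u i + p i) ^ 2 - q i ^ 2 := by
    intro i
    nlinarith [hpq i, sq_nonneg (u i + 2 * p i)]
  have hpr : ∀ i, p i ^ 2 ≤ r ^ 2 := fun i => by nlinarith [hpq i, sq_nonneg (q i)]
  have hp1 : -r ≤ p i₀ := by nlinarith [hpr i₀, hr]
  have hp2 : p i₀ ≤ r := by nlinarith [hpr i₀, hr]
  have hbig : (|c| - r) ^ 2 ≤ (c + p i₀) ^ 2 - q i₀ ^ 2 := by
    rcases abs_cases c with ⟨h1, h2⟩ | ⟨h1, h2⟩ <;> rw [h1]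
    · have hA : 0 ≤ p i₀ + r := by linarith
      have hB : 0 ≤ c - r + p i₀ := by rw [h1] at hcr; linarith
      nlinarith [mul_nonneg hA hB, hpq i₀]
    · have hA : 0 ≤ r - p i₀ := by linarith
      have hB : 0 ≤ -c - r - p i₀ := by rw [h1] at hcr; linarith
      nlinarith [mul_nonneg hA hB, hpq i₀]
  -- split sums at i₀
  have hsplit : ∀ f : Fin n → ℝ, ∑ i, f i = f i₀ + ∑ i ∈ Finset.univ.erase i₀, f i := by
    intro f
    rw [Finset.add_sum_erase _ f (Finset.mem_univ i₀)]
  have hrest : ∑ i ∈ Finset.univ.erase i₀, (u i ^ 2 / 2 - r ^ 2)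
      ≤ ∑ i ∈ Finset.univ.erase i₀, ((u i + p i) ^ 2 - q i ^ 2) :=
    Finset.sum_le_sum fun i _ => hsmall i
  have hcard : (Finset.univ.erase i₀).card = n - 1 := by
    rw [Finset.card_erase_of_mem (Finset.mem_univ i₀)]
    simp
  have hrest2 : ∑ i ∈ Finset.univ.erase i₀, (u i ^ 2 / 2 - r ^ 2)
      = (∑ i ∈ Finset.univ.erase i₀, u i ^ 2) / 2 - ((n:ℝ) - 1) * r ^ 2 := by
    rw [Finset.sum_sub_distrib, Finset.sum_const, hcard, Finset.sum_div, nsmul_eq_mul]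
    have h1n : ((n - 1 : ℕ) : ℝ) = (n : ℝ) - 1 := by
      have : 1 ≤ n := by omega
      push_cast [this]; ring
    rw [h1n]
  have hsum_erase : ∑ i ∈ Finset.univ.erase i₀, u i ^ 2 = (∑ i, u i ^ 2) - c ^ 2 := by
    rw [hsplit (fun i => u i ^ 2)]; ring
  -- key scalar inequality via s = √n
  set s := Real.sqrt n with hs
  have hs2 : s ^ 2 = n := Real.sq_sqrt hn0.le
  have hs0 : 0 < s := Real.sqrt_pos.mpr hn0
  have hs1 : 1 ≤ s := by nlinarith [hs2, hs0]
  have e1 : (|c| * s) ^ 2 = (n:ℝ) * c ^ 2 := by rw [mul_pow, sq_abs, hs2]; ring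
  have h1 : (2 * ((n:ℝ) + 1) * r) ^ 2 ≤ (|c| * s) ^ 2 := by rw [e1]; nlinarith [hc2]
  have hds : 2 * ((n:ℝ) + 1) * r ≤ |c| * s :=
    le_of_pow_le_pow_left₀ two_ne_zero (mul_nonneg (abs_nonneg c) hs0.le) h1
  have hfinal : 0 ≤ c ^ 2 / 2 - 2 * |c| * r - ((n : ℝ) - 2) * r ^ 2 := by
    have hA : 0 ≤ |c| * s - 2 * ((n:ℝ) + 1) * r := by linarith
    have hB : 0 ≤ |c| * s + 2 * ((n:ℝ) + 1) * r - 4 * s * r := by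
      have hsn : s ≤ (n:ℝ) + 1 := by nlinarith [hs2, sq_nonneg (s - 1)]
      nlinarith [hds, mul_nonneg hr.le (sub_nonneg.mpr hsn)]
    have hkey := mul_nonneg hA hB
    rw [← hs2] at hkey ⊢
    nlinarith [hkey, mul_nonneg (mul_nonneg (sq_nonneg ((s-1)^2)) hr.le) hr.le,
      mul_pos hs0 hs0, hr, sq_abs c]
  rw [hsplit (fun i => (u i + p i) ^ 2 - q i ^ 2)]
  nlinarith [hfinal, hrest, hrest2, hsum_erase, hbig, sq_abs c]



-- helper: Euclidean norm squared
lemma euclid_sq (y : EuclideanSpace ℝ (Fin n)) : ∑ i, (y i) ^ 2 = ‖y‖ ^ 2 := by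
  have h := EuclideanSpace.norm_eq y
  rw [h, Real.sq_sqrt (Finset.sum_nonneg fun i _ => sq_nonneg _)]
  congr 1; funext i; rw [Real.norm_eq_abs, sq_abs]

-- S is analytic
lemma S_analyticAt (z : Fin n → ℂ) : AnalyticAt ℂ (fun z : Fin n → ℂ => ∑ i, (z i) ^ 2) z := by
  apply Finset.analyticAt_fun_sum
  intro i _
  exact ((ContinuousLinearMap.proj i : (Fin n → ℂ) →L[ℂ] ℂ).analyticAt z).pow 2

-- properties of the square root on the right half plane
lemma W_props {a : ℂ} {A : ℝ} (hA : 0 < A) (ha : A ≤ a.re) :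
    Real.sqrt A ≤ (a ^ ((1:ℂ)/2)).re ∧ Real.sqrt A ≤ ‖a ^ ((1:ℂ)/2)‖ := by
  have ha0 : a ≠ 0 := by
    intro h; rw [h] at ha; simp at ha; linarith
  set W : ℂ := a ^ ((1:ℂ)/2) with hW
  have hWsq : W * W = a := by
    rw [hW, ← Complex.cpow_add _ _ ha0]
    norm_num
  have hreW0 : 0 ≤ W.re := by
    rw [hW, Complex.cpow_def_of_ne_zero ha0, Complex.exp_re]
    have him : (Complex.log a * (1/2)).im = a.arg / 2 := by
      simp [Complex.mul_im, Complex.log_im]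
      ring
    rw [him]
    apply mul_nonneg (Real.exp_nonneg _)
    apply Real.cos_nonneg_of_mem_Icc
    constructor
    · have := Complex.neg_pi_lt_arg a
      linarith
    · have := Complex.arg_le_pi a
      linarith
  have hsb : a.re = W.re ^ 2 - W.im ^ 2 := by
    conv_lhs => rw [← hWsq]
    rw [Complex.mul_re]; ring
  have h1 : Real.sqrt A ≤ W.re := by
    have h2 : a.re ≤ W.re ^ 2 := by nlinarith [sq_nonneg W.im]
    calc Real.sqrt A ≤ Real.sqrt (W.re ^ 2) := Real.sqrt_le_sqrt (le_trans ha h2)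
      _ = |W.re| := Real.sqrt_sq_eq_abs _
      _ = W.re := abs_of_nonneg hreW0
  refine ⟨h1, ?_⟩
  have habs : A ≤ ‖a‖ := le_trans ha (Complex.re_le_norm a)
  have h3 : ‖W‖ = ‖a‖ ^ ((1:ℝ)/2) := by
    rw [hW, Complex.norm_cpow_of_ne_zero ha0]
    norm_num
  rw [h3, show Real.sqrt A = A ^ ((1:ℝ)/2) from Real.sqrt_eq_rpow A]
  exact Real.rpow_le_rpow hA.le habs (by norm_num)


-- congruence of mderiv-style foldr on open sets
lemma mderiv_foldr_congr {V : Set (EuclideanSpace ℝ (Fin n))} (hV : IsOpen V)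
    (β : Fin n → ℕ) : ∀ (l : List (Fin n)) {f g : EuclideanSpace ℝ (Fin n) → ℝ},
    (∀ y ∈ V, f y = g y) → ∀ y ∈ V,
      l.foldr (fun i g' => (partialDeriv i)^[β i] g') f y
        = l.foldr (fun i g' => (partialDeriv i)^[β i] g') g y := by
  intro l
  induction l with
  | nil => intro f g h y hy; exact h y hy
  | cons i l' ih =>
    intro f g h y hy
    simp only [List.foldr_cons]
    exact pd_iter_congr hV i (β i) (fun v hv => ih h v hv) y hy

set_option maxHeartbeats 1000000 in
theorem statement12 (n : ℕ) (hn : 2 ≤ n) (β : Fin n → ℕ) (t : ℝ) (ht : 0 < t)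
    (x : EuclideanSpace ℝ (Fin n)) (hx : x ≠ 0) :
    |mderiv β (fun y => Real.exp (-t * ‖y‖) / ‖y‖ ^ (n - 1)) x|
      ≤ (mfactorial β : ℝ) * (Real.sqrt 2 / ‖x‖) ^ (n - 1) * ((2 * n + 2) / ‖x‖) ^ (msize β)
        * Real.exp (-t * ‖x‖ / 2) := by
  have hx0 : 0 < ‖x‖ := norm_pos_iff.mpr hx
  have hN : (0:ℝ) < 2 * n + 2 := by positivity
  set r : ℝ := ‖x‖ / (2 * n + 2) with hrdef
  have hr : 0 < r := div_pos hx0 hN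
  set S : (Fin n → ℂ) → ℂ := fun z => ∑ i, (z i) ^ 2 with hSdef
  set W : (Fin n → ℂ) → ℂ := fun z => (S z) ^ ((1:ℂ)/2) with hWdef
  set F : (Fin n → ℂ) → ℂ := fun z => Complex.exp (-(t:ℂ) * W z) / (W z) ^ (n-1) with hFdef
  set U : Set (Fin n → ℂ) := {z | 0 < (S z).re} with hUdef
  have hSc : Continuous S := by
    apply continuous_finset_sum
    intro i _
    exact (continuous_apply i).pow 2
  have hU : IsOpen U := isOpen_lt continuous_const (Complex.continuous_re.comp hSc)
  -- analyticity of F on U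
  have hF : AnalyticOnNhd ℂ F U := by
    intro z hz
    have hSz : AnalyticAt ℂ S z := S_analyticAt z
    have hslit : S z ∈ Complex.slitPlane := Or.inl hz
    have hS0 : S z ≠ 0 := Complex.slitPlane_ne_zero hslit
    have hWa : AnalyticAt ℂ W z := hSz.cpow analyticAt_const hslit
    have hW0 : W z ≠ 0 := by
      rw [hWdef]
      simp only
      rw [Ne, Complex.cpow_eq_zero_iff]
      rintro ⟨h1, -⟩
      exact hS0 h1
    exact ((analyticAt_const.mul hWa).cexp).div (hWa.pow (n-1)) (pow_ne_zero _ hW0)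
  -- the polydisc
  set D : Set (Fin n → ℂ) := poly r (List.finRange n) (iotaC n x) with hDdef
  have hD : ∀ w ∈ D, ∀ i, dist (w i) ((x i : ℂ)) ≤ r := fun w hw i => hw.1 i (List.mem_finRange i)
  -- geometric bound : Re S ≥ ‖x‖²/2 on D
  have hgeo : ∀ w ∈ D, ‖x‖ ^ 2 / 2 ≤ (S w).re := by
    intro w hw
    have hpq : ∀ i, ((w i).re - x i) ^ 2 + ((w i).im) ^ 2 ≤ r ^ 2 := by
      intro i
      have h1 : ‖w i - (x i : ℂ)‖ ≤ r := by
        rw [← Complex.dist_eq]; exact hD w hw i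
      have h2 : ((w i).re - x i) ^ 2 + ((w i).im) ^ 2 = ‖w i - (x i:ℂ)‖ ^ 2 := by
        rw [Complex.sq_norm, Complex.normSq_apply, Complex.sub_re, Complex.sub_im]
        simp
        ring
      rw [h2]
      exact pow_le_pow_left₀ (norm_nonneg _) h1 2
    have hXsum : ∑ i, (x i) ^ 2 = ((2 * n + 2) * r) ^ 2 := by
      rw [euclid_sq, hrdef]
      field_simp
    have hg := geom hn (fun i => x i) (fun i => (w i).re - x i) (fun i => (w i).im) hr hXsum hpq
    have hre : (S w).re = ∑ i, (((x i) + ((w i).re - x i)) ^ 2 - ((w i).im) ^ 2) := by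
      rw [hSdef]
      simp only
      rw [Complex.re_sum]
      congr 1; funext i
      rw [sq (w i), Complex.mul_re]
      ring
    rw [hre, ← euclid_sq x]
    exact le_trans (le_of_eq rfl) hg
  have hsub : D ⊆ U := by
    intro w hw
    exact lt_of_lt_of_le (div_pos (pow_pos hx0 2) two_pos) (hgeo w hw)
  -- the sup bound
  set M : ℝ := (Real.sqrt 2 / ‖x‖) ^ (n-1) * Real.exp (-t * ‖x‖ / 2) with hMdef
  have hsqrt2 : Real.sqrt 2 ≤ 2 := by
    nlinarith [Real.sq_sqrt (by norm_num : (0:ℝ) ≤ 2), Real.sqrt_nonneg 2]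
  have hsqrt2pos : 0 < Real.sqrt 2 := Real.sqrt_pos.mpr (by norm_num)
  have hM : ∀ w ∈ D, ‖F w‖ ≤ M := by
    intro w hw
    have ha : ‖x‖ ^ 2 / 2 ≤ (S w).re := hgeo w hw
    have hA : (0:ℝ) < ‖x‖ ^ 2 / 2 := div_pos (pow_pos hx0 2) two_pos
    obtain ⟨hre, hnorm⟩ := W_props hA ha
    have hsA : Real.sqrt (‖x‖ ^ 2 / 2) = ‖x‖ / Real.sqrt 2 := by
      rw [Real.sqrt_div (sq_nonneg ‖x‖) 2, Real.sqrt_sq hx0.le]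
    rw [hsA] at hre hnorm
    have hre2 : ‖x‖ / 2 ≤ (W w).re := by
      refine le_trans ?_ hre
      gcongr
    have hFw : ‖F w‖ = Real.exp (-t * (W w).re) / ‖W w‖ ^ (n-1) := by
      rw [hFdef]
      simp only
      rw [norm_div, norm_pow, Complex.norm_exp]
      congr 2
      simp [Complex.mul_re]
    rw [hFw, hMdef]
    have hnum : Real.exp (-t * (W w).re) ≤ Real.exp (-t * ‖x‖ / 2) := by
      apply Real.exp_le_exp.mpr
      nlinarith [hre2, ht]
    have hden : (‖x‖ / Real.sqrt 2) ^ (n-1) ≤ ‖W w‖ ^ (n-1) :=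
      pow_le_pow_left₀ (by positivity) hnorm _
    have hden0 : (0:ℝ) < (‖x‖ / Real.sqrt 2) ^ (n-1) := by positivity
    calc Real.exp (-t * (W w).re) / ‖W w‖ ^ (n-1)
        ≤ Real.exp (-t * ‖x‖ / 2) / (‖x‖ / Real.sqrt 2) ^ (n-1) :=
          div_le_div₀ (Real.exp_nonneg _) hnum hden0 hden
      _ = (Real.sqrt 2 / ‖x‖) ^ (n-1) * Real.exp (-t * ‖x‖ / 2) := by
          rw [div_eq_mul_inv, ← inv_pow, inv_div]
          ring
  -- key Cauchy estimate on the polydisc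
  have hkey := key hU hr β (List.finRange n) (List.nodup_finRange n) F hF (iotaC n x) hsub hM
  -- transfer to real partial derivatives
  have hxU : iotaC n x ∈ U := hsub (self_mem_poly hr.le _ _)
  have hVopen : IsOpen ((iotaC n) ⁻¹' U) := hU.preimage (iotaC n).continuous
  have hfeq : ∀ y ∈ (iotaC n) ⁻¹' U,
      Real.exp (-t * ‖y‖) / ‖y‖ ^ (n-1) = (F (iotaC n y)).re := by
    intro y hy
    have hSy : S (iotaC n y) = ((‖y‖ ^ 2 : ℝ) : ℂ) := by
      rw [hSdef]
      simp only [iotaC_apply]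
      rw [← euclid_sq y]
      push_cast
      ring
    have hy2 : (0:ℝ) < ‖y‖ ^ 2 := by
      have h0 : (0:ℝ) < (S (iotaC n y)).re := hy
      rw [hSy, Complex.ofReal_re] at h0
      exact h0
    have hy0 : 0 < ‖y‖ := by nlinarith [norm_nonneg y]
    have hWy : W (iotaC n y) = ((‖y‖ : ℝ) : ℂ) := by
      rw [hWdef]
      simp only
      rw [hSy, show ((1:ℂ)/2) = (((1/2 : ℝ) : ℝ) : ℂ) by norm_num,
        ← Complex.ofReal_cpow (sq_nonneg ‖y‖) (1/2), ← Real.sqrt_eq_rpow,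
        Real.sqrt_sq hy0.le]
    rw [hFdef]
    simp only
    rw [hWy, show -(t:ℂ) * ((‖y‖ : ℝ) : ℂ) = (((-t * ‖y‖ : ℝ)) : ℂ) by push_cast; ring,
      ← Complex.ofReal_exp, ← Complex.ofReal_pow, ← Complex.ofReal_div, Complex.ofReal_re]
  have hcongr := mderiv_foldr_congr hVopen β (List.finRange n) hfeq x hxU
  have htrans := mderiv_transfer hU β (List.finRange n) F hF x hxU
  have hP : ((List.finRange n).map fun i => ((β i).factorial : ℝ)).prod = (mfactorial β : ℝ) := by
    rw [mfactorial]
    push_cast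
    rw [Fin.prod_univ_def]
  have hSs : ((List.finRange n).map β).sum = msize β := by
    rw [msize, Fin.sum_univ_def]
  rw [mderiv, hcongr, htrans]
  calc |((((List.finRange n).foldr (fun i g => (cpd i)^[β i] g) F)) (iotaC n x)).re|
      ≤ ‖(((List.finRange n).foldr (fun i g => (cpd i)^[β i] g) F)) (iotaC n x)‖ :=
        Complex.abs_re_le_norm _
    _ ≤ ((List.finRange n).map fun i => ((β i).factorial : ℝ)).prod * M
          / r ^ ((List.finRange n).map β).sum := hkey
    _ = (mfactorial β : ℝ) * (Real.sqrt 2 / ‖x‖) ^ (n - 1) * ((2 * n + 2) / ‖x‖) ^ (msize β)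
          * Real.exp (-t * ‖x‖ / 2) := by
        rw [hP, hSs, hMdef]
        rw [show ((2 * (n:ℝ) + 2) / ‖x‖) = r⁻¹ by rw [hrdef, inv_div], inv_pow, div_eq_mul_inv]
        ring
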